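/- Let $(E,\mathcal{E})$ be a measurable space, $U$ nonempty, $c_n : E \times U \to \mathbb{R}$ bounded with span norm $\|c_n\|_{sp} = \sup_{x,x'}\sup_{a,a'}(c_n(x,a) - c_n(x',a'))$, and $P_n^a(x,\cdot)$ Markov kernels with ratio bound $K_n := \sup_{x,x'}\sup_a \sup_B P_n^a(x,B)/P_n^a(x',B) < \infty$. For fixed $\gamma \ne 0$ define $\tilde T_n v(x) = \sup_{a\in U}\big[c_n(x,a) + \frac{1}{\gamma}\ln \int_E e^{\gamma v(y)} P_n^a(x,dy)\big]$. Then for every bounded measurable $v$, $\|\tilde T_n v\|_{sp} \le \|c_n\|_{sp} + \frac{1}{|\gamma|}\ln K_n$. -/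

import Mathlib

open MeasureTheory

/-- Span seminorm of a real-valued function. -/
noncomputable def spanSeminorm {E : Type*} (v : E → ℝ) : ℝ :=
  ⨆ p : E × E, (v p.1 - v p.2)

theorem stmt_8 {E U : Type*} [MeasurableSpace E] [Nonempty E] [Nonempty U]
    (P : U → E → Measure E) (hP : ∀ a x, IsProbabilityMeasure (P a x))
    (c : E → U → ℝ) (csp : ℝ)
    (hcsp : ∀ x x' a a', c x a - c x' a' ≤ csp)
    (hcb : ∃ M, ∀ x a, |c x a| ≤ M)
    (K : ℝ)
    (hK : ∀ (a : U) x x' (B : Set E), MeasurableSet B →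
      (P a x B).toReal ≤ K * (P a x' B).toReal)
    (v : E → ℝ) (hm : Measurable v) (hb : ∃ M, ∀ x, |v x| ≤ M)
    (γ : ℝ) (hγ : γ ≠ 0) :
    spanSeminorm
        (fun x => ⨆ a : U, (c x a + (1 / γ) * Real.log (∫ y, Real.exp (γ * v y) ∂(P a x))))
      ≤ csp + (1 / |γ|) * Real.log K := by
  obtain ⟨M, hM⟩ := hb
  obtain ⟨Mc, hMc⟩ := hcb
  have hM0 : 0 ≤ M := le_trans (abs_nonneg _) (hM (Classical.arbitrary E))
  have hK1 : (1:ℝ) ≤ K := by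
    haveI := hP (Classical.arbitrary U) (Classical.arbitrary E)
    have := hK (Classical.arbitrary U) (Classical.arbitrary E) (Classical.arbitrary E)
      Set.univ MeasurableSet.univ
    simpa [measure_univ] using this
  have hK0 : (0:ℝ) < K := lt_of_lt_of_le one_pos hK1
  set f : E → ℝ := fun y => Real.exp (γ * v y) with hf
  have hfm : Measurable f := (measurable_const.mul hm).exp
  have hfpos : ∀ y, 0 < f y := fun y => Real.exp_pos _
  have habs : ∀ y, |γ * v y| ≤ |γ| * M := by
    intro y
    rw [abs_mul]
    exact mul_le_mul_of_nonneg_left (hM y) (abs_nonneg _)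
  have hfle : ∀ y, f y ≤ Real.exp (|γ| * M) := fun y =>
    Real.exp_le_exp.2 (le_trans (le_abs_self _) (habs y))
  have hfge : ∀ y, Real.exp (-(|γ| * M)) ≤ f y := fun y =>
    Real.exp_le_exp.2 (neg_le_of_abs_le (habs y))
  -- integrability
  have hInt : ∀ a x, Integrable f (P a x) := by
    intro a x
    haveI := hP a x
    exact (integrable_const (Real.exp (|γ| * M))).mono' hfm.aestronglyMeasurable
      (ae_of_all _ fun y => by
        rw [Real.norm_eq_abs, abs_of_pos (hfpos y)]; exact hfle y)
  set I : U → E → ℝ := fun a x => ∫ y, f y ∂(P a x) with hI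
  have hIpos : ∀ a x, Real.exp (-(|γ| * M)) ≤ I a x := by
    intro a x
    haveI := hP a x
    calc Real.exp (-(|γ| * M)) = ∫ _, Real.exp (-(|γ| * M)) ∂(P a x) := by
          simp
      _ ≤ I a x := integral_mono (integrable_const _) (hInt a x) fun y => hfge y
  have hIle : ∀ a x, I a x ≤ Real.exp (|γ| * M) := by
    intro a x
    haveI := hP a x
    calc I a x ≤ ∫ _, Real.exp (|γ| * M) ∂(P a x) :=
          integral_mono (hInt a x) (integrable_const _) fun y => hfle y
      _ = Real.exp (|γ| * M) := by simp
  have hIpos' : ∀ a x, 0 < I a x := fun a x => lt_of_lt_of_le (Real.exp_pos _) (hIpos a x)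
  -- key measure-comparison of integrals
  have hle : ∀ (a : U) x x', I a x ≤ K * I a x' := by
    intro a x x'
    haveI := hP a x
    haveI := hP a x'
    have hμν : P a x ≤ ENNReal.ofReal K • P a x' := by
      refine Measure.le_iff.2 fun B hB => ?_
      have h1 := hK a x x' B hB
      have hfin : P a x B ≠ ⊤ := measure_ne_top _ _
      have hfin' : P a x' B ≠ ⊤ := measure_ne_top _ _
      rw [Measure.smul_apply, smul_eq_mul, ← ENNReal.ofReal_toReal hfin,
        ← ENNReal.ofReal_toReal hfin', ← ENNReal.ofReal_mul hK0.le]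
      exact ENNReal.ofReal_le_ofReal h1
    calc I a x ≤ ∫ y, f y ∂(ENNReal.ofReal K • P a x') :=
          integral_mono_measure hμν (ae_of_all _ fun y => (hfpos y).le)
            ((hInt a x').smul_measure ENNReal.ofReal_ne_top)
      _ = K * I a x' := by
          rw [integral_smul_measure, ENNReal.toReal_ofReal hK0.le, smul_eq_mul]
  -- log bounds
  have hlogK : ∀ a x x', Real.log (I a x) ≤ Real.log K + Real.log (I a x') := by
    intro a x x'
    calc Real.log (I a x) ≤ Real.log (K * I a x') :=
          Real.log_le_log (hIpos' a x) (hle a x x')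
      _ = Real.log K + Real.log (I a x') :=
          Real.log_mul (ne_of_gt hK0) (ne_of_gt (hIpos' a x'))
  -- per-action log term bound
  have hlogterm : ∀ a x x',
      (1 / γ) * Real.log (I a x) ≤ (1 / γ) * Real.log (I a x') + (1 / |γ|) * Real.log K := by
    intro a x x'
    rcases lt_or_gt_of_ne hγ with hneg | hpos
    · have habsγ : |γ| = -γ := abs_of_neg hneg
      have h1 : (0:ℝ) < 1 / (-γ) := div_pos one_pos (neg_pos.2 hneg)
      have h2 := mul_le_mul_of_nonneg_left (hlogK a x' x) h1.le
      have hγγ : 1 / γ = -(1 / (-γ)) := by field_simp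
      rw [habsγ]
      nlinarith [h2]
    · have habsγ : |γ| = γ := abs_of_pos hpos
      have h1 : (0:ℝ) < 1 / γ := by positivity
      have h2 := mul_le_mul_of_nonneg_left (hlogK a x x') h1.le
      rw [habsγ]
      nlinarith [h2]
  -- boundedness of the family
  set g : E → U → ℝ := fun x a => c x a + (1 / γ) * Real.log (I a x) with hg
  have hlogbdd : ∀ a x, |Real.log (I a x)| ≤ |γ| * M := by
    intro a x
    rw [abs_le]
    constructor
    · rw [← Real.log_exp (-(|γ| * M))]
      exact Real.log_le_log (Real.exp_pos _) (hIpos a x)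
    · rw [← Real.log_exp (|γ| * M)]
      exact Real.log_le_log (hIpos' a x) (hIle a x)
  have hgbdd : ∀ x, BddAbove (Set.range fun a => g x a) := by
    intro x
    refine ⟨Mc + |1 / γ| * (|γ| * M), ?_⟩
    rintro _ ⟨a, rfl⟩
    have h1 : c x a ≤ Mc := (abs_le.1 (hMc x a)).2
    have h2 : (1 / γ) * Real.log (I a x) ≤ |1 / γ| * (|γ| * M) := by
      calc (1 / γ) * Real.log (I a x) ≤ |(1 / γ) * Real.log (I a x)| := le_abs_self _
        _ = |1 / γ| * |Real.log (I a x)| := abs_mul _ _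
        _ ≤ |1 / γ| * (|γ| * M) := mul_le_mul_of_nonneg_left (hlogbdd a x) (abs_nonneg _)
    exact add_le_add h1 h2
  -- main bound on T x - T x'
  have hmain : ∀ x x', (⨆ a : U, g x a) - (⨆ a : U, g x' a) ≤ csp + (1 / |γ|) * Real.log K := by
    intro x x'
    rw [sub_le_iff_le_add]
    refine ciSup_le fun a => ?_
    have h1 : g x a ≤ g x' a + (csp + (1 / |γ|) * Real.log K) := by
      have hc : c x a ≤ c x' a + csp := by linarith [hcsp x x' a a]
      have hl := hlogterm a x x'
      simp only [hg]
      linarith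
    have h2 : g x' a ≤ ⨆ a : U, g x' a := le_ciSup (hgbdd x') a
    calc g x a ≤ g x' a + (csp + (1 / |γ|) * Real.log K) := h1
      _ ≤ (⨆ a : U, g x' a) + (csp + (1 / |γ|) * Real.log K) := add_le_add_left h2 _
      _ = csp + (1 / |γ|) * Real.log K + ⨆ a : U, g x' a := by ring
  -- conclude
  unfold spanSeminorm
  refine ciSup_le fun p => hmain p.1 p.2
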